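/- Let R be a ring, let F, G : ModuleCat R ⥤ ModuleCat R be additive functors such that F preserves epimorphisms, and let α : F ⟶ G be a natural transformation. Let M be an R-module and let N₁, N₂ be submodules of M such that the components of α at N₁ and at N₂ (regarded as objects of ModuleCat R) are zero. Then the component of α at the submodule N₁ ⊔ N₂ is zero. -/

import Mathlib

open CategoryTheory

universe u

/-- If a natural transformation `α : F ⟶ G` between additive endofunctors of `ModuleCat R`,
with `F` preserving epimorphisms, annihilates submodules `N₁` and `N₂` of `M`, then it
annihilates `N₁ ⊔ N₂`. -/
theorem natTrans_app_sup_zero (R : Type u) [Ring R]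
    (F G : ModuleCat.{u} R ⥤ ModuleCat.{u} R) [F.Additive] [G.Additive]
    [F.PreservesEpimorphisms] (α : F ⟶ G)
    (M : Type u) [AddCommGroup M] [Module R M] (N₁ N₂ : Submodule R M)
    (h₁ : α.app (ModuleCat.of R N₁) = 0) (h₂ : α.app (ModuleCat.of R N₂) = 0) :
    α.app (ModuleCat.of R (↥(N₁ ⊔ N₂))) = 0 := by
  set X : ModuleCat.{u} R := ModuleCat.of R (↥N₁ × ↥N₂)
  set i₁ : ModuleCat.of R N₁ ⟶ X := ModuleCat.ofHom (LinearMap.inl R ↥N₁ ↥N₂)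
  set i₂ : ModuleCat.of R N₂ ⟶ X := ModuleCat.ofHom (LinearMap.inr R ↥N₁ ↥N₂)
  set p₁ : X ⟶ ModuleCat.of R N₁ := ModuleCat.ofHom (LinearMap.fst R ↥N₁ ↥N₂)
  set p₂ : X ⟶ ModuleCat.of R N₂ := ModuleCat.ofHom (LinearMap.snd R ↥N₁ ↥N₂)
  have hid : 𝟙 X = p₁ ≫ i₁ + p₂ ≫ i₂ := by
    apply ModuleCat.hom_ext
    apply LinearMap.ext
    rintro ⟨x, y⟩
    show (x, y) = ((x, 0) + (0, y) : ↥N₁ × ↥N₂)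
    simp
  -- α at X is zero
  have hX : α.app X = 0 := by
    have := α.naturality i₁
    have := α.naturality i₂
    calc α.app X = F.map (𝟙 X) ≫ α.app X := by simp
    _ = (F.map (p₁ ≫ i₁) + F.map (p₂ ≫ i₂)) ≫ α.app X := by
        rw [hid, F.map_add]
    _ = F.map p₁ ≫ (F.map i₁ ≫ α.app X) + F.map p₂ ≫ (F.map i₂ ≫ α.app X) := by
        simp [Preadditive.add_comp]
    _ = F.map p₁ ≫ (α.app _ ≫ G.map i₁) + F.map p₂ ≫ (α.app _ ≫ G.map i₂) := by
        rw [α.naturality i₁, α.naturality i₂]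
    _ = 0 := by rw [h₁, h₂]; simp
  -- the epimorphism onto the sup
  set π : X ⟶ ModuleCat.of R (↥(N₁ ⊔ N₂)) :=
    ModuleCat.ofHom ((Submodule.inclusion (le_sup_left : N₁ ≤ N₁ ⊔ N₂)).coprod
      (Submodule.inclusion (le_sup_right : N₂ ≤ N₁ ⊔ N₂)))
  have hπ : Epi π := by
    rw [ModuleCat.epi_iff_surjective]
    rintro ⟨z, hz⟩
    rcases Submodule.mem_sup.mp hz with ⟨x, hx, y, hy, rfl⟩
    exact ⟨(⟨x, hx⟩, ⟨y, hy⟩), rfl⟩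
  have hFπ : Epi (F.map π) := F.map_epi π
  rw [← cancel_epi (F.map π), α.naturality π, hX]
  simp
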